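/- Let I ⊆ K[y_1,...,y_m, x_1,...,x_n] be an ideal generated by polynomials g_1,...,g_s ∈ K[x_1,...,x_n] together with polynomials H_i = y_i − h_i where h_i ∈ K[x_1,...,x_n] for i = 1,...,m. Fix a monomial order on K[y,x] in which each y_i is greater than every monomial in K[x] and which restricts to a given monomial order on K[x]. If G ⊆ K[x_1,...,x_n] is a Gröbner basis of ⟨g_1,...,g_s⟩ ⊆ K[x], then G ∪ {H_1,...,H_m} is a Gröbner basis of I. -/

import Mathlib

open MvPolynomial
open scoped MonomialOrder

noncomputable def MonomialOrder.lexp {σ : Type*} (m : MonomialOrder σ) {K : Type*}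
    [CommSemiring K] (f : MvPolynomial σ K) : σ →₀ ℕ :=
  m.toSyn.symm (f.support.sup fun d => m.toSyn d)

noncomputable def MonomialOrder.leadTerm {σ : Type*} (m : MonomialOrder σ) {K : Type*}
    [CommSemiring K] (f : MvPolynomial σ K) : MvPolynomial σ K :=
  monomial (m.lexp f) (f.coeff (m.lexp f))

def MonomialOrder.IsGroebnerBasis {σ : Type*} (m : MonomialOrder σ) {K : Type*} [Field K]
    (I : Ideal (MvPolynomial σ K)) (G : Set (MvPolynomial σ K)) : Prop :=
  G ⊆ (I : Set (MvPolynomial σ K)) ∧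
    Ideal.span (m.leadTerm '' (I : Set (MvPolynomial σ K))) =
      Ideal.span (m.leadTerm '' G)

namespace MonomialOrder
variable {σ : Type*} (m : MonomialOrder σ) {K : Type*} [CommSemiring K]
lemma toSyn_lexp (f : MvPolynomial σ K) :
    m.toSyn (m.lexp f) = f.support.sup fun d => m.toSyn d := by
  simp [MonomialOrder.lexp]
lemma le_lexp {f : MvPolynomial σ K} {d : σ →₀ ℕ} (hd : d ∈ f.support) :
    d ≼[m] m.lexp f := by
  rw [m.toSyn_lexp]
  exact Finset.le_sup hd
lemma lexp_mem_support {f : MvPolynomial σ K} (hf : f ≠ 0) :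
    m.lexp f ∈ f.support := by
  obtain ⟨b, hb, he⟩ := Finset.exists_mem_eq_sup f.support
    (Finset.nonempty_iff_ne_empty.mpr fun h0 => hf (MvPolynomial.support_eq_empty.mp h0))
    fun d => m.toSyn d
  have : m.lexp f = b := by
    simp only [MonomialOrder.lexp, he]
    exact m.toSyn.symm_apply_apply b
  rwa [this]
lemma lexp_eq_of {f : MvPolynomial σ K} {b : σ →₀ ℕ} (hb : b ∈ f.support)
    (hmax : ∀ d ∈ f.support, d ≼[m] b) : m.lexp f = b := by
  have hf : f ≠ 0 := fun h0 => by simp [h0] at hb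
  exact m.toSyn.injective
    (le_antisymm (hmax _ (m.lexp_mem_support hf)) (m.le_lexp hb))
end MonomialOrder

section Aux
variable {q n : ℕ} {K : Type*} [Field K]

lemma lexp_rename_aux (m : MonomialOrder (Fin n)) (mt : MonomialOrder (Fin q ⊕ Fin n))
    (hrestrict : ∀ a b : Fin n →₀ ℕ,
      (a ≼[m] b) ↔ (Finsupp.mapDomain Sum.inr a ≼[mt] Finsupp.mapDomain Sum.inr b))
    {f : MvPolynomial (Fin n) K} (hf : f ≠ 0) :
    mt.lexp (rename (Sum.inr : Fin n → Fin q ⊕ Fin n) f)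
      = Finsupp.mapDomain Sum.inr (m.lexp f) := by
  classical
  apply mt.lexp_eq_of
  · rw [support_rename_of_injective Sum.inr_injective]
    exact Finset.mem_image_of_mem _ (m.lexp_mem_support hf)
  · intro d hd
    rw [support_rename_of_injective Sum.inr_injective, Finset.mem_image] at hd
    obtain ⟨d', hd', rfl⟩ := hd
    exact (hrestrict _ _).mp (m.le_lexp hd')

lemma leadTerm_rename_aux (m : MonomialOrder (Fin n)) (mt : MonomialOrder (Fin q ⊕ Fin n))
    (hrestrict : ∀ a b : Fin n →₀ ℕ,
      (a ≼[m] b) ↔ (Finsupp.mapDomain Sum.inr a ≼[mt] Finsupp.mapDomain Sum.inr b))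
    (f : MvPolynomial (Fin n) K) :
    mt.leadTerm (rename (Sum.inr : Fin n → Fin q ⊕ Fin n) f)
      = rename (Sum.inr : Fin n → Fin q ⊕ Fin n) (m.leadTerm f) := by
  by_cases hf : f = 0
  · simp [hf, MonomialOrder.leadTerm]
  rw [MonomialOrder.leadTerm, MonomialOrder.leadTerm, lexp_rename_aux m mt hrestrict hf,
    coeff_rename_mapDomain _ Sum.inr_injective, rename_monomial]

lemma leadTerm_H_aux (mt : MonomialOrder (Fin q ⊕ Fin n))
    (horder : ∀ (a : (Fin q ⊕ Fin n) →₀ ℕ) (i : Fin q),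
      (∀ j : Fin q, a (Sum.inl j) = 0) →
        a ≺[mt] Finsupp.single (Sum.inl i : Fin q ⊕ Fin n) 1)
    (h : Fin q → MvPolynomial (Fin n) K) (i : Fin q) :
    mt.leadTerm (X (Sum.inl i) - rename (Sum.inr : Fin n → Fin q ⊕ Fin n) (h i))
      = monomial (Finsupp.single (Sum.inl i) 1) 1 := by
  classical
  set H : MvPolynomial (Fin q ⊕ Fin n) K :=
    X (Sum.inl i) - rename (Sum.inr : Fin n → Fin q ⊕ Fin n) (h i) with hH
  have hcoeff : H.coeff (Finsupp.single (Sum.inl i) 1) = 1 := by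
    rw [hH, coeff_sub, coeff_X]
    have : (rename (Sum.inr : Fin n → Fin q ⊕ Fin n) (h i)).coeff
        (Finsupp.single (Sum.inl i) 1) = 0 := by
      apply coeff_rename_eq_zero
      intro u hu
      exfalso
      have h0 : (Finsupp.mapDomain (Sum.inr : Fin n → Fin q ⊕ Fin n) u) (Sum.inl i) = 0 :=
        Finsupp.mapDomain_notin_range u (Sum.inl i) (by simp)
      rw [hu, Finsupp.single_eq_same] at h0
      exact one_ne_zero h0
    rw [this, sub_zero, if_pos rfl]
  have hmem : Finsupp.single (Sum.inl i) 1 ∈ H.support :=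
    mem_support_iff.mpr (by rw [hcoeff]; exact one_ne_zero)
  have hlexp : mt.lexp H = Finsupp.single (Sum.inl i) 1 := by
    apply mt.lexp_eq_of hmem
    intro d hd
    have := support_sub _ (X (Sum.inl i)) (rename (Sum.inr : Fin n → Fin q ⊕ Fin n) (h i)) hd
    rw [Finset.mem_union] at this
    rcases this with h1 | h2
    · rw [support_X, Finset.mem_singleton] at h1
      exact le_of_eq (congrArg _ h1)
    · rw [support_rename_of_injective Sum.inr_injective, Finset.mem_image] at h2
      obtain ⟨u, _, rfl⟩ := h2
      exact le_of_lt (horder _ i fun j =>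
        Finsupp.mapDomain_notin_range u (Sum.inl j) (by simp))
  rw [MonomialOrder.leadTerm, hlexp, hcoeff]

end Aux


/-- Lifting a Gröbner basis along intermediates (Theorem `Proposition Groebner Intermediates`,
first part, in algebraic form).  The big ring `K[y₁,…,y_q, x₁,…,xₙ]` is
`MvPolynomial (Fin q ⊕ Fin n) K` with `yᵢ = X (Sum.inl i)`, `xⱼ = X (Sum.inr j)`, and `K[x]`
embeds via `rename Sum.inr`.  Let `I` be generated by `g₁,…,g_s ∈ K[x]` together with the
polynomials `Hᵢ = yᵢ − hᵢ`, `hᵢ ∈ K[x]`.  Assume the order `m̃` on `K[y,x]` makes every `yᵢ`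
greater than each monomial in the `x`-variables and restricts to the order `m` on `K[x]`.
If `G ⊆ K[x]` is a Gröbner basis of `⟨g₁,…,g_s⟩` w.r.t. `m`, then
`G ∪ {H₁,…,H_q}` is a Gröbner basis of `I` w.r.t. `m̃`. -/
theorem groebner_basis_lift_intermediates
    {q n s : ℕ} {K : Type*} [Field K]
    (m : MonomialOrder (Fin n)) (mt : MonomialOrder (Fin q ⊕ Fin n))
    (horder : ∀ (a : (Fin q ⊕ Fin n) →₀ ℕ) (i : Fin q),
      (∀ j : Fin q, a (Sum.inl j) = 0) →
        a ≺[mt] Finsupp.single (Sum.inl i : Fin q ⊕ Fin n) 1)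
    (hrestrict : ∀ a b : Fin n →₀ ℕ,
      (a ≼[m] b) ↔
        (Finsupp.mapDomain Sum.inr a ≼[mt] Finsupp.mapDomain Sum.inr b))
    (g : Fin s → MvPolynomial (Fin n) K) (h : Fin q → MvPolynomial (Fin n) K)
    (G : Set (MvPolynomial (Fin n) K))
    (hG : m.IsGroebnerBasis (Ideal.span (Set.range g)) G)
    (I : Ideal (MvPolynomial (Fin q ⊕ Fin n) K))
    (hI : I = Ideal.span
      ((Set.range fun i => rename (Sum.inr : Fin n → Fin q ⊕ Fin n) (g i)) ∪
        (Set.range fun i : Fin q =>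
          X (Sum.inl i) - rename (Sum.inr : Fin n → Fin q ⊕ Fin n) (h i)))) :
    mt.IsGroebnerBasis I
      ((rename (Sum.inr : Fin n → Fin q ⊕ Fin n) '' G) ∪
        (Set.range fun i : Fin q =>
          X (Sum.inl i) - rename (Sum.inr : Fin n → Fin q ⊕ Fin n) (h i))) := by
  classical
  have hsub : (rename (Sum.inr : Fin n → Fin q ⊕ Fin n) '' G) ∪
      (Set.range fun i : Fin q =>
        X (Sum.inl i) - rename (Sum.inr : Fin n → Fin q ⊕ Fin n) (h i)) ⊆
      (I : Set (MvPolynomial (Fin q ⊕ Fin n) K)) := by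
    rintro p hp
    rcases hp with ⟨g', hg', rfl⟩ | hp
    · have hmem : g' ∈ Ideal.span (Set.range g) := hG.1 hg'
      have h1 : rename (Sum.inr : Fin n → Fin q ⊕ Fin n) g' ∈
          Ideal.map (rename (Sum.inr : Fin n → Fin q ⊕ Fin n) :
            MvPolynomial (Fin n) K →ₐ[K] MvPolynomial (Fin q ⊕ Fin n) K).toRingHom
            (Ideal.span (Set.range g)) := Ideal.mem_map_of_mem _ hmem
      rw [Ideal.map_span] at h1
      rw [hI]
      refine Ideal.span_mono ?_ h1
      rintro _ ⟨_, ⟨i, rfl⟩, rfl⟩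
      exact Or.inl ⟨i, rfl⟩
    · rw [hI]; exact Ideal.subset_span (Or.inr hp)
  refine ⟨hsub, le_antisymm ?_
    (Ideal.span_mono (Set.image_mono hsub))⟩
  rw [Ideal.span_le]
  rintro _ ⟨f, hf, rfl⟩
  by_cases hf0 : f = 0
  · simp only [hf0, MonomialOrder.leadTerm, coeff_zero, monomial_zero]
    exact Ideal.zero_mem _
  by_cases hy : ∀ j : Fin q, (mt.lexp f) (Sum.inl j) = 0
  · -- the leading monomial is free of the y variables
    have hfree : ∀ d ∈ f.support, ∀ j : Fin q, d (Sum.inl j) = 0 := by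
      intro d hd j
      by_contra hdj
      have h1 : (Finsupp.single (Sum.inl j) 1 : (Fin q ⊕ Fin n) →₀ ℕ) ≤ d :=
        Finsupp.single_le_iff.mpr (Nat.one_le_iff_ne_zero.mpr hdj)
      exact absurd ((horder _ j hy).trans_le
        ((mt.toSyn_monotone h1).trans (mt.le_lexp hd))) (lt_irrefl _)
    have hvars : ↑f.vars ⊆ Set.range (Sum.inr : Fin n → Fin q ⊕ Fin n) := by
      intro x hx
      rw [Finset.mem_coe, mem_vars] at hx
      obtain ⟨d, hd, hxd⟩ := hx
      match x with
      | Sum.inl j => exact absurd (hfree d hd j) (Finsupp.mem_support_iff.mp hxd)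
      | Sum.inr j => exact ⟨j, rfl⟩
    obtain ⟨f', rfl⟩ :=
      exists_rename_eq_of_vars_subset_range f Sum.inr Sum.inr_injective hvars
    have hf'mem : f' ∈ Ideal.span (Set.range g) := by
      have hval : (aeval (Sum.elim h X : Fin q ⊕ Fin n → MvPolynomial (Fin n) K))
          (rename (Sum.inr : Fin n → Fin q ⊕ Fin n) f') = f' := by
        rw [aeval_rename]
        exact aeval_X_left_apply f'
      have hmap : Ideal.map ((aeval (Sum.elim h X : Fin q ⊕ Fin n →
          MvPolynomial (Fin n) K)).toRingHom) I ≤ Ideal.span (Set.range g) := by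
        rw [hI, Ideal.map_span, Ideal.span_le]
        rintro _ ⟨p, hp, rfl⟩
        rcases hp with ⟨i, rfl⟩ | ⟨i, rfl⟩
        · have : ((aeval (Sum.elim h X : Fin q ⊕ Fin n →
              MvPolynomial (Fin n) K)).toRingHom)
              (rename (Sum.inr : Fin n → Fin q ⊕ Fin n) (g i)) = g i := by
            simp only [AlgHom.toRingHom_eq_coe, RingHom.coe_coe, aeval_rename]
            exact aeval_X_left_apply (g i)
          rw [this]
          exact Ideal.subset_span ⟨i, rfl⟩
        · have : ((aeval (Sum.elim h X : Fin q ⊕ Fin n →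
              MvPolynomial (Fin n) K)).toRingHom)
              (X (Sum.inl i) - rename (Sum.inr : Fin n → Fin q ⊕ Fin n) (h i)) = 0 := by
            simp only [AlgHom.toRingHom_eq_coe, RingHom.coe_coe, map_sub, aeval_X,
              aeval_rename]
            rw [show (Sum.elim h X : Fin q ⊕ Fin n → MvPolynomial (Fin n) K) ∘ Sum.inr
              = X from rfl, aeval_X_left_apply, Sum.elim_inl, sub_self]
          rw [this]
          exact Ideal.zero_mem _
      have := Ideal.mem_map_of_mem
        ((aeval (Sum.elim h X : Fin q ⊕ Fin n → MvPolynomial (Fin n) K)).toRingHom) hf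
      rw [show ((aeval (Sum.elim h X : Fin q ⊕ Fin n → MvPolynomial (Fin n) K)).toRingHom)
        (rename (Sum.inr : Fin n → Fin q ⊕ Fin n) f') = f' from hval] at this
      exact hmap this
    have hlt : m.leadTerm f' ∈ Ideal.span (m.leadTerm '' G) := by
      rw [← hG.2]
      exact Ideal.subset_span ⟨f', hf'mem, rfl⟩
    have h2 : rename (Sum.inr : Fin n → Fin q ⊕ Fin n) (m.leadTerm f') ∈
        Ideal.map (rename (Sum.inr : Fin n → Fin q ⊕ Fin n) :
          MvPolynomial (Fin n) K →ₐ[K] MvPolynomial (Fin q ⊕ Fin n) K).toRingHom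
          (Ideal.span (m.leadTerm '' G)) := Ideal.mem_map_of_mem _ hlt
    rw [Ideal.map_span] at h2
    rw [leadTerm_rename_aux m mt hrestrict]
    refine Ideal.span_mono ?_ h2
    rintro _ ⟨_, ⟨g', hg', rfl⟩, rfl⟩
    exact ⟨rename (Sum.inr : Fin n → Fin q ⊕ Fin n) g', Or.inl ⟨g', hg', rfl⟩,
      (leadTerm_rename_aux m mt hrestrict g' :
        mt.leadTerm ((rename Sum.inr) g') = (rename Sum.inr) (m.leadTerm g'))⟩
  · push_neg at hy
    obtain ⟨j, hj⟩ := hy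
    have hle : (Finsupp.single (Sum.inl j) 1 : (Fin q ⊕ Fin n) →₀ ℕ) ≤ mt.lexp f :=
      Finsupp.single_le_iff.mpr (Nat.one_le_iff_ne_zero.mpr hj)
    have key : mt.leadTerm f =
        monomial (mt.lexp f - Finsupp.single (Sum.inl j) 1) (f.coeff (mt.lexp f))
          * monomial (Finsupp.single (Sum.inl j) 1) 1 := by
      rw [monomial_mul, mul_one, tsub_add_cancel_of_le hle]
      rfl
    rw [key, ← leadTerm_H_aux mt horder h j]
    exact Ideal.mul_mem_left _ _ (Ideal.subset_span ⟨_, Or.inr ⟨j, rfl⟩, rfl⟩)
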